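/- Let A : 𝒳ⁿ → ℝⁿ be a bounded linear operator. Then the linear time-invariant system ẋ(t) = A x_t is GES if and only if its origin is AS. -/

import Mathlib

open Set Filter MeasureTheory Topology
open scoped NNReal

noncomputable section

/-- `ℝⁿ` with the Euclidean norm. -/
abbrev Vec (n : ℕ) : Type := EuclideanSpace ℝ (Fin n)

/-- The state space `𝒳ⁿ = C([-Δ,0], ℝⁿ)`, equipped with the sup norm. -/
abbrev Hist (Δ : ℝ≥0) (n : ℕ) : Type :=
  ContinuousMap (Icc (-(Δ : ℝ)) (0 : ℝ)) (Vec n)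

theorem zero_mem_IccD (Δ : ℝ≥0) : (0 : ℝ) ∈ Icc (-(Δ : ℝ)) (0 : ℝ) :=
  ⟨neg_nonpos.mpr Δ.coe_nonneg, le_refl 0⟩

/-- `φ(0)`: the current value of a history segment. -/
def ev0 {Δ : ℝ≥0} {n : ℕ} (φ : Hist Δ n) : Vec n :=
  φ ⟨0, zero_mem_IccD Δ⟩

/-! ### Comparison functions -/

/-- Class `𝒦`: continuous, strictly increasing, zero at zero (on `[0,∞)`). -/
def ClassK (α : ℝ → ℝ) : Prop :=
  ContinuousOn α (Ici 0) ∧ StrictMonoOn α (Ici 0) ∧ α 0 = 0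

/-- Class `𝒦∞`: class `𝒦` and unbounded. -/
def ClassKinf (α : ℝ → ℝ) : Prop :=
  ClassK α ∧ Tendsto α atTop atTop

/-- Class `𝒩`: continuous, nondecreasing, zero at zero (on `[0,∞)`). -/
def ClassN (α : ℝ → ℝ) : Prop :=
  ContinuousOn α (Ici 0) ∧ MonotoneOn α (Ici 0) ∧ α 0 = 0

/-- Class `𝒫`: continuous, zero at zero, positive on `(0,∞)`. -/
def ClassP (α : ℝ → ℝ) : Prop :=
  ContinuousOn α (Ici 0) ∧ α 0 = 0 ∧ ∀ s : ℝ, 0 < s → 0 < α s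

/-- Class `𝒦ℒ`. -/
def ClassKL (β : ℝ → ℝ → ℝ) : Prop :=
  (∀ t : ℝ, 0 ≤ t → ClassK fun s => β s t) ∧
    ∀ s : ℝ, 0 ≤ s →
      ContinuousOn (β s) (Ici 0) ∧ AntitoneOn (β s) (Ici 0) ∧
        Tendsto (β s) atTop (𝓝 0)

/-! ### Inputs -/

/-- Admissible input: Lebesgue measurable and locally essentially bounded. -/
def IsInput {m : ℕ} (u : ℝ → Vec m) : Prop :=
  Measurable u ∧ ∀ T : ℝ, 0 < T → ∃ C : ℝ, ∀ᵐ t ∂volume, t ∈ Icc (0 : ℝ) T → ‖u t‖ ≤ C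

/-- Essential supremum of `‖u‖` over a set of times. -/
def essBnd {m : ℕ} (u : ℝ → Vec m) (s : Set ℝ) : ℝ :=
  sInf {C : ℝ | 0 ≤ C ∧ ∀ᵐ τ ∂volume, τ ∈ s → ‖u τ‖ ≤ C}

/-! ### History segments along a trajectory -/

-- The history segment `x_t ∈ 𝒳ⁿ` of a trajectory `x : ℝ → ℝⁿ` (with junk value `0`
-- when `x` is not continuous on `[t-Δ, t]`).
open Classical in
def seg (Δ : ℝ≥0) {n : ℕ} (x : ℝ → Vec n) (t : ℝ) : Hist Δ n :=
  if hx : ContinuousOn x (Icc (t - (Δ : ℝ)) t) then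
    { toFun := fun τ => x (t + τ.1)
      continuous_toFun := by
        have h1 : Continuous fun τ : Icc (-(Δ : ℝ)) (0 : ℝ) => t + τ.1 :=
          continuous_const.add continuous_subtype_val
        have h2 : ∀ τ : Icc (-(Δ : ℝ)) (0 : ℝ), t + τ.1 ∈ Icc (t - (Δ : ℝ)) t := by
          rintro ⟨τ, hτ⟩
          rw [mem_Icc] at hτ ⊢
          constructor
          · linarith [hτ.1]
          · linarith [hτ.2]
        exact hx.comp_continuous h1 h2 }
  else 0

/-! ### Driver's derivative and Dini derivative -/

/-- The deformed history `φ_{h,w}` appearing in Driver's derivative: for `0 ≤ h < Δ`,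
`φ_{h,w}(s) = φ(s+h)` for `s ∈ [-Δ,-h)` and `φ_{h,w}(s) = φ(0) + w(h+s)` for `s ∈ [-h,0]`. -/
def shiftSeg {Δ : ℝ≥0} {n : ℕ} (φ : Hist Δ n) (w : Vec n) (h : ℝ) : Hist Δ n :=
  { toFun := fun s =>
      φ (projIcc (-(Δ : ℝ)) 0 (neg_nonpos.mpr Δ.coe_nonneg) (s.1 + h)) + max (h + s.1) 0 • w
    continuous_toFun := by
      refine Continuous.add ?_ ?_
      · exact φ.continuous.comp (continuous_projIcc.comp
          (continuous_subtype_val.add continuous_const))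
      · exact ((continuous_const.add continuous_subtype_val).max continuous_const).smul
          continuous_const }

/-- Driver's derivative `D⁺V(φ,w)`, valued in the extended reals. -/
def driverD {Δ : ℝ≥0} {n : ℕ} (V : Hist Δ n → ℝ) (φ : Hist Δ n) (w : Vec n) : EReal :=
  limsup (fun h : ℝ => (((V (shiftSeg φ w h) - V φ) / h : ℝ) : EReal)) (𝓝[>] (0 : ℝ))

/-- Upper right-hand Dini derivative of `ν : ℝ → ℝ`, valued in the extended reals. -/
def diniD (ν : ℝ → ℝ) (t : ℝ) : EReal :=
  limsup (fun h : ℝ => (((ν (t + h) - ν t) / h : ℝ) : EReal)) (𝓝[>] (0 : ℝ))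

/-! ### Lipschitz conditions -/

/-- `f : 𝒳ⁿ × ℝᵐ → ℝⁿ` is Lipschitz on bounded sets. -/
def LipOnBounded {Δ : ℝ≥0} {n m : ℕ} (f : Hist Δ n → Vec m → Vec n) : Prop :=
  ∀ r : ℝ, 0 < r → ∃ L : ℝ, 0 < L ∧
    ∀ (φ₁ φ₂ : Hist Δ n) (v₁ v₂ : Vec m),
      ‖φ₁‖ ≤ r → ‖φ₂‖ ≤ r → ‖v₁‖ ≤ r → ‖v₂‖ ≤ r →
        ‖f φ₁ v₁ - f φ₂ v₂‖ ≤ L * (‖φ₁ - φ₂‖ + ‖v₁ - v₂‖)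

/-- An input-free vector field `f₀ : 𝒳ⁿ → ℝⁿ` Lipschitz on bounded sets. -/
def LipOnBounded₀ {Δ : ℝ≥0} {n : ℕ} (f₀ : Hist Δ n → Vec n) : Prop :=
  ∀ r : ℝ, 0 < r → ∃ L : ℝ, 0 < L ∧
    ∀ φ₁ φ₂ : Hist Δ n, ‖φ₁‖ ≤ r → ‖φ₂‖ ≤ r → ‖f₀ φ₁ - f₀ φ₂‖ ≤ L * ‖φ₁ - φ₂‖

/-- A functional `V : 𝒳ⁿ → ℝ` Lipschitz on bounded sets. -/
def LipOnBoundedV {Δ : ℝ≥0} {n : ℕ} (V : Hist Δ n → ℝ) : Prop :=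
  ∀ r : ℝ, 0 < r → ∃ L : ℝ, 0 < L ∧
    ∀ φ₁ φ₂ : Hist Δ n, ‖φ₁‖ ≤ r → ‖φ₂‖ ≤ r → |V φ₁ - V φ₂| ≤ L * ‖φ₁ - φ₂‖

/-- A functional `V : 𝒳ⁿ → ℝ` locally Lipschitz. -/
def LocallyLipV {Δ : ℝ≥0} {n : ℕ} (V : Hist Δ n → ℝ) : Prop :=
  ∀ φ : Hist Δ n, ∃ δ : ℝ, 0 < δ ∧ ∃ L : ℝ, 0 < L ∧
    ∀ φ₁ φ₂ : Hist Δ n, ‖φ₁ - φ‖ ≤ δ → ‖φ₂ - φ‖ ≤ δ → |V φ₁ - V φ₂| ≤ L * ‖φ₁ - φ₂‖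

/-! ### Solutions -/

/-- `x` is a solution of `ẋ(t) = f(x_t, u(t))` with initial state `x₀` on `[0, tmax)`. -/
structure IsSolution (Δ : ℝ≥0) {n m : ℕ} (f : Hist Δ n → Vec m → Vec n)
    (u : ℝ → Vec m) (x₀ : Hist Δ n) (tmax : EReal) (x : ℝ → Vec n) : Prop where
  tmax_pos : 0 < tmax
  cont : ContinuousOn x {s : ℝ | -(Δ : ℝ) ≤ s ∧ (s : EReal) < tmax}
  init : ∀ τ : Icc (-(Δ : ℝ)) (0 : ℝ), x τ.1 = x₀ τ
  integrable : ∀ t : ℝ, 0 ≤ t → (t : EReal) < tmax →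
    IntervalIntegrable (fun s => f (seg Δ x s) (u s)) volume 0 t
  integral_eq : ∀ t : ℝ, 0 ≤ t → (t : EReal) < tmax →
    x t = x 0 + ∫ s in (0:ℝ)..t, f (seg Δ x s) (u s)

/-- Maximal solution: a solution admitting no proper extension. -/
def IsMaxSolution (Δ : ℝ≥0) {n m : ℕ} (f : Hist Δ n → Vec m → Vec n)
    (u : ℝ → Vec m) (x₀ : Hist Δ n) (tmax : EReal) (x : ℝ → Vec n) : Prop :=
  IsSolution Δ f u x₀ tmax x ∧
    ∀ (tmax' : EReal) (x' : ℝ → Vec n), IsSolution Δ f u x₀ tmax' x' →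
      (∀ t : ℝ, -(Δ : ℝ) ≤ t → (t : EReal) < tmax → x' t = x t) → tmax' ≤ tmax

/-- Solution of the input-free system `ẋ(t) = f₀(x_t)`. -/
def IsSolution₀ (Δ : ℝ≥0) {n : ℕ} (f₀ : Hist Δ n → Vec n) (x₀ : Hist Δ n)
    (tmax : EReal) (x : ℝ → Vec n) : Prop :=
  IsSolution Δ (fun φ (_ : Vec 0) => f₀ φ) (fun _ => 0) x₀ tmax x

/-- Maximal solution of the input-free system `ẋ(t) = f₀(x_t)`. -/
def IsMaxSolution₀ (Δ : ℝ≥0) {n : ℕ} (f₀ : Hist Δ n → Vec n) (x₀ : Hist Δ n)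
    (tmax : EReal) (x : ℝ → Vec n) : Prop :=
  IsMaxSolution Δ (fun φ (_ : Vec 0) => f₀ φ) (fun _ => 0) x₀ tmax x

/-! ### Stability properties (input-free systems) -/

/-- Global asymptotic stability (GAS). -/
def GAS (Δ : ℝ≥0) {n : ℕ} (f₀ : Hist Δ n → Vec n) : Prop :=
  ∃ β : ℝ → ℝ → ℝ, ClassKL β ∧
    ∀ (x₀ : Hist Δ n) (tmax : EReal) (x : ℝ → Vec n),
      IsMaxSolution₀ Δ f₀ x₀ tmax x →
        tmax = ⊤ ∧ ∀ t : ℝ, 0 ≤ t → ‖x t‖ ≤ β ‖x₀‖ t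

/-- Global exponential stability (GES). -/
def GES (Δ : ℝ≥0) {n : ℕ} (f₀ : Hist Δ n → Vec n) : Prop :=
  ∃ k : ℝ, 1 ≤ k ∧ ∃ lam : ℝ, 0 < lam ∧
    ∀ (x₀ : Hist Δ n) (tmax : EReal) (x : ℝ → Vec n),
      IsMaxSolution₀ Δ f₀ x₀ tmax x →
        tmax = ⊤ ∧ ∀ t : ℝ, 0 ≤ t → ‖x t‖ ≤ k * ‖x₀‖ * Real.exp (-lam * t)

/-- (Local) asymptotic stability (AS) of the origin. -/
def AS (Δ : ℝ≥0) {n : ℕ} (f₀ : Hist Δ n → Vec n) : Prop :=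
  ∃ r : ℝ, 0 < r ∧ ∃ β : ℝ → ℝ → ℝ, ClassKL β ∧
    ∀ (x₀ : Hist Δ n) (tmax : EReal) (x : ℝ → Vec n),
      IsMaxSolution₀ Δ f₀ x₀ tmax x → ‖x₀‖ ≤ r →
        tmax = ⊤ ∧ ∀ t : ℝ, 0 ≤ t → ‖x t‖ ≤ β ‖x₀‖ t

/-- (Local) exponential stability (ES) of the origin. -/
def ES (Δ : ℝ≥0) {n : ℕ} (f₀ : Hist Δ n → Vec n) : Prop :=
  ∃ r : ℝ, 0 < r ∧ ∃ k : ℝ, 1 ≤ k ∧ ∃ lam : ℝ, 0 < lam ∧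
    ∀ (x₀ : Hist Δ n) (tmax : EReal) (x : ℝ → Vec n),
      IsMaxSolution₀ Δ f₀ x₀ tmax x → ‖x₀‖ ≤ r →
        tmax = ⊤ ∧ ∀ t : ℝ, 0 ≤ t → ‖x t‖ ≤ k * ‖x₀‖ * Real.exp (-lam * t)

/-! ### Forward completeness -/

/-- Robust forward completeness (RFC) of `ẋ(t) = f(x_t,u(t))`. -/
def RFC (Δ : ℝ≥0) {n m : ℕ} (f : Hist Δ n → Vec m → Vec n) : Prop :=
  (∀ (x₀ : Hist Δ n) (u : ℝ → Vec m) (tmax : EReal) (x : ℝ → Vec n),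
      IsInput u → IsMaxSolution Δ f u x₀ tmax x → tmax = ⊤) ∧
    ∀ T : ℝ, 0 < T → ∀ r : ℝ, 0 < r → ∃ C : ℝ,
      ∀ (x₀ : Hist Δ n) (u : ℝ → Vec m) (tmax : EReal) (x : ℝ → Vec n),
        IsInput u → IsMaxSolution Δ f u x₀ tmax x →
          ‖x₀‖ ≤ r → essBnd u (Ici 0) ≤ r →
            ∀ t : ℝ, t ∈ Icc (0 : ℝ) T → ‖seg Δ x t‖ ≤ C

/-- Robust forward completeness of the input-free system `ẋ(t) = f₀(x_t)`. -/
def RFC₀ (Δ : ℝ≥0) {n : ℕ} (f₀ : Hist Δ n → Vec n) : Prop :=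
  RFC Δ (fun φ (_ : Vec 0) => f₀ φ)

/-! ### Input-to-state stability notions -/

/-- Input-to-state stability (ISS). -/
def ISS (Δ : ℝ≥0) {n m : ℕ} (f : Hist Δ n → Vec m → Vec n) : Prop :=
  ∃ β : ℝ → ℝ → ℝ, ∃ μ : ℝ → ℝ, ClassKL β ∧ ClassN μ ∧
    ∀ (x₀ : Hist Δ n) (u : ℝ → Vec m) (tmax : EReal) (x : ℝ → Vec n),
      IsInput u → IsMaxSolution Δ f u x₀ tmax x →
        tmax = ⊤ ∧ ∀ t : ℝ, 0 ≤ t → ‖x t‖ ≤ β ‖x₀‖ t + μ (essBnd u (Icc 0 t))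

/-- Local input-to-state stability (LISS). -/
def LISS (Δ : ℝ≥0) {n m : ℕ} (f : Hist Δ n → Vec m → Vec n) : Prop :=
  ∃ r : ℝ, 0 < r ∧ ∃ β : ℝ → ℝ → ℝ, ∃ μ : ℝ → ℝ, ClassKL β ∧ ClassN μ ∧
    ∀ (x₀ : Hist Δ n) (u : ℝ → Vec m) (tmax : EReal) (x : ℝ → Vec n),
      IsInput u → IsMaxSolution Δ f u x₀ tmax x →
        ‖x₀‖ ≤ r → essBnd u (Ici 0) ≤ r →
          tmax = ⊤ ∧ ∀ t : ℝ, 0 ≤ t → ‖x t‖ ≤ β ‖x₀‖ t + μ (essBnd u (Icc 0 t))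

/-- Integral input-to-state stability (iISS). -/
def iISS (Δ : ℝ≥0) {n m : ℕ} (f : Hist Δ n → Vec m → Vec n) : Prop :=
  ∃ β : ℝ → ℝ → ℝ, ∃ η μ : ℝ → ℝ, ClassKL β ∧ ClassN η ∧ ClassN μ ∧
    ∀ (x₀ : Hist Δ n) (u : ℝ → Vec m) (tmax : EReal) (x : ℝ → Vec n),
      IsInput u → IsMaxSolution Δ f u x₀ tmax x →
        tmax = ⊤ ∧ ∀ t : ℝ, 0 ≤ t →
          ‖x t‖ ≤ β ‖x₀‖ t + η (∫ s in (0:ℝ)..t, μ ‖u s‖)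

/-- The UBEBS estimate with offset `c`. -/
def UBEBSwith (Δ : ℝ≥0) {n m : ℕ} (f : Hist Δ n → Vec m → Vec n) (c : ℝ) : Prop :=
  ∃ α ξ ζ : ℝ → ℝ, ClassKinf α ∧ ClassKinf ξ ∧ ClassKinf ζ ∧
    ∀ (x₀ : Hist Δ n) (u : ℝ → Vec m) (tmax : EReal) (x : ℝ → Vec n),
      IsInput u → IsMaxSolution Δ f u x₀ tmax x →
        tmax = ⊤ ∧ ∀ t : ℝ, 0 ≤ t →
          α ‖x t‖ ≤ ξ ‖x₀‖ + (∫ s in (0:ℝ)..t, ζ ‖u s‖) + c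

/-! ### Lyapunov–Krasovskii functionals -/

/-- Lyapunov–Krasovskii functional candidate (LKF). -/
def IsLKF {Δ : ℝ≥0} {n : ℕ} (V : Hist Δ n → ℝ) : Prop :=
  (∀ φ, 0 ≤ V φ) ∧ LipOnBoundedV V ∧
    ∃ α₁ α₂ : ℝ → ℝ, ClassKinf α₁ ∧ ClassKinf α₂ ∧
      ∀ φ : Hist Δ n, α₁ ‖ev0 φ‖ ≤ V φ ∧ V φ ≤ α₂ ‖φ‖

/-- Coercive Lyapunov–Krasovskii functional candidate. -/
def IsCoerciveLKF {Δ : ℝ≥0} {n : ℕ} (V : Hist Δ n → ℝ) : Prop :=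
  (∀ φ, 0 ≤ V φ) ∧ LipOnBoundedV V ∧
    ∃ α₁ α₂ : ℝ → ℝ, ClassKinf α₁ ∧ ClassKinf α₂ ∧
      ∀ φ : Hist Δ n, α₁ ‖φ‖ ≤ V φ ∧ V φ ≤ α₂ ‖φ‖

end

noncomputable section Helpers

open Set Filter

variable {Δ : ℝ≥0} {n : ℕ}

lemma contOn_comp_add {X : Type*} [TopologicalSpace X] (y : ℝ → X) (a b c : ℝ) :
    ContinuousOn (fun τ => y (τ + c)) (Icc a b) ↔ ContinuousOn y (Icc (a + c) (b + c)) := by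
  constructor
  · intro h
    have h2 : ContinuousOn ((fun τ => y (τ + c)) ∘ (fun τ : ℝ => τ - c))
        (Icc (a + c) (b + c)) := by
      refine h.comp (Continuous.continuousOn (by continuity)) ?_
      intro τ hτ
      simp only [mem_Icc] at hτ ⊢
      constructor <;> linarith [hτ.1, hτ.2]
    have : ((fun τ => y (τ + c)) ∘ (fun τ : ℝ => τ - c)) = y := by
      funext τ; simp
    rwa [this] at h2
  · intro h
    refine h.comp (Continuous.continuousOn (by continuity)) ?_
    intro τ hτ
    simp only [mem_Icc] at hτ ⊢
    constructor <;> linarith [hτ.1, hτ.2]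

lemma seg_shift (x : ℝ → Vec n) (T s : ℝ) :
    seg Δ (fun τ => x (τ + T)) s = seg Δ x (s + T) := by
  have hiff : ContinuousOn (fun τ => x (τ + T)) (Icc (s - (Δ:ℝ)) s) ↔
      ContinuousOn x (Icc (s + T - (Δ:ℝ)) (s + T)) := by
    rw [contOn_comp_add]
    constructor <;> (intro h; convert h using 2 <;> ring)
  unfold seg
  by_cases h : ContinuousOn x (Icc (s + T - (Δ:ℝ)) (s + T))
  · rw [dif_pos (hiff.mpr h), dif_pos h]
    ext τ : 1
    simp only [ContinuousMap.coe_mk]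
    congr 1
    ring
  · rw [dif_neg (fun hc => h (hiff.mp hc)), dif_neg h]

lemma seg_smul (x : ℝ → Vec n) (c : ℝ) (hc : c ≠ 0) (s : ℝ) :
    seg Δ (fun τ => c • x τ) s = c • seg Δ x s := by
  have hiff : ContinuousOn (fun τ => c • x τ) (Icc (s - (Δ:ℝ)) s) ↔
      ContinuousOn x (Icc (s - (Δ:ℝ)) s) := by
    constructor
    · intro h
      have h2 := h.const_smul c⁻¹
      simpa [Pi.smul_def, smul_smul, inv_mul_cancel₀ hc] using h2
    · intro h; exact h.const_smul c
  unfold seg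
  by_cases h : ContinuousOn x (Icc (s - (Δ:ℝ)) s)
  · rw [dif_pos (hiff.mpr h), dif_pos h]
    ext τ
    simp
  · rw [dif_neg (fun hc' => h (hiff.mp hc')), dif_neg h]
    ext τ; simp

lemma seg_apply (x : ℝ → Vec n) (t : ℝ) (hx : ContinuousOn x (Icc (t - (Δ:ℝ)) t))
    (τ : Icc (-(Δ:ℝ)) (0:ℝ)) : seg Δ x t τ = x (t + τ.1) := by
  unfold seg
  rw [dif_pos hx]
  rfl

lemma norm_seg_le (x : ℝ → Vec n) (t : ℝ) (hx : ContinuousOn x (Icc (t - (Δ:ℝ)) t))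
    {C : ℝ} (hC : 0 ≤ C) (hb : ∀ τ : ℝ, t - (Δ:ℝ) ≤ τ → τ ≤ t → ‖x τ‖ ≤ C) :
    ‖seg Δ x t‖ ≤ C := by
  rw [ContinuousMap.norm_le _ hC]
  intro τ
  rw [seg_apply x t hx τ]
  exact hb _ (by linarith [τ.2.1]) (by linarith [τ.2.2])

lemma solset_eq (Δ : ℝ≥0) : {s : ℝ | -(Δ:ℝ) ≤ s ∧ (s : EReal) < (⊤ : EReal)} = Ici (-(Δ:ℝ)) := by
  ext s
  simp [EReal.coe_lt_top]

lemma isSolution_smul (A : Hist Δ n →L[ℝ] Vec n) {x₀ : Hist Δ n} {tmax : EReal}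
    {x : ℝ → Vec n} (c : ℝ) (hc : c ≠ 0)
    (h : IsSolution₀ Δ (fun φ => A φ) x₀ tmax x) :
    IsSolution₀ Δ (fun φ => A φ) (c • x₀) tmax (fun t => c • x t) := by
  have hfun : (fun s => A (seg Δ (fun t => c • x t) s)) = fun s => c • A (seg Δ x s) := by
    funext s
    rw [seg_smul x c hc s]; exact A.map_smul c _
  exact
  { tmax_pos := h.tmax_pos
    cont := h.cont.const_smul c
    init := fun τ => by
      simp only [ContinuousMap.smul_apply]
      rw [h.init τ]
    integrable := fun t ht htm => by
      have h2 := (h.integrable t ht htm).smul c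
      simpa [hfun, Pi.smul_def] using h2
    integral_eq := fun t ht htm => by
      show c • x t = c • x 0 + ∫ s in (0:ℝ)..t, A (seg Δ (fun t => c • x t) s)
      rw [hfun, intervalIntegral.integral_smul, h.integral_eq t ht htm, smul_add] }

lemma isMaxSolution_smul (A : Hist Δ n →L[ℝ] Vec n) {x₀ : Hist Δ n} {tmax : EReal}
    {x : ℝ → Vec n} (c : ℝ) (hc : c ≠ 0)
    (h : IsMaxSolution₀ Δ (fun φ => A φ) x₀ tmax x) :
    IsMaxSolution₀ Δ (fun φ => A φ) (c • x₀) tmax (fun t => c • x t) := by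
  refine ⟨isSolution_smul A c hc h.1, ?_⟩
  intro tmax' x' hsol hagree
  have h2 := isSolution_smul A c⁻¹ (inv_ne_zero hc) hsol
  rw [smul_smul, inv_mul_cancel₀ hc, one_smul] at h2
  refine h.2 tmax' _ h2 ?_
  intro t h1 h2'
  have := hagree t h1 h2'
  simp only [this]
  rw [smul_smul, inv_mul_cancel₀ hc, one_smul]

lemma isSolution_shift (A : Hist Δ n →L[ℝ] Vec n) {x₀ : Hist Δ n} {x : ℝ → Vec n}
    (T : ℝ) (hT : 0 ≤ T)
    (h : IsSolution₀ Δ (fun φ => A φ) x₀ (⊤ : EReal) x) :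
    IsSolution₀ Δ (fun φ => A φ) (seg Δ x T) (⊤ : EReal) (fun t => x (t + T)) := by
  have hxc : ContinuousOn x (Ici (-(Δ:ℝ))) := by
    have := h.cont
    rwa [solset_eq] at this
  have hTc : ContinuousOn x (Icc (T - (Δ:ℝ)) T) := by
    refine hxc.mono ?_
    intro s hs
    simp only [mem_Icc] at hs
    simp only [mem_Ici]
    linarith [hs.1, Δ.coe_nonneg]
  have hfun : (fun s => A (seg Δ (fun τ => x (τ + T)) s)) = fun s => A (seg Δ x (s + T)) := by
    funext s
    rw [seg_shift x T s]
  have hint : ∀ t : ℝ, 0 ≤ t →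
      IntervalIntegrable (fun s => A (seg Δ x s)) MeasureTheory.volume T (T + t) := by
    intro t ht
    have h2 := h.integrable (T + t) (by linarith) (EReal.coe_lt_top _)
    refine h2.mono_set ?_
    rw [uIcc_of_le (by linarith), uIcc_of_le (by linarith)]
    exact Icc_subset_Icc (by linarith) le_rfl
  exact
  { tmax_pos := h.tmax_pos
    cont := by
      rw [solset_eq]
      refine hxc.comp (Continuous.continuousOn (by continuity)) ?_
      intro s hs
      simp only [mem_Ici] at hs ⊢
      linarith
    init := fun τ => by
      show x (τ.1 + T) = seg Δ x T τ
      rw [seg_apply x T hTc τ, add_comm]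
    integrable := fun t ht htm => by
      show IntervalIntegrable (fun s => A (seg Δ (fun τ => x (τ + T)) s)) MeasureTheory.volume 0 t
      rw [hfun]
      have h3 := (hint t ht).comp_add_right T
      simpa using h3
    integral_eq := fun t ht htm => by
      show x (t + T) = x (0 + T) + ∫ s in (0:ℝ)..t, A (seg Δ (fun τ => x (τ + T)) s)
      rw [hfun, zero_add]
      have ecv : (∫ s in (0:ℝ)..t, A (seg Δ x (s + T))) =
          ∫ s in T..(T + t), A (seg Δ x s) := by
        rw [intervalIntegral.integral_comp_add_right (fun s => A (seg Δ x s)) T]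
        congr 1 <;> ring
      rw [ecv]
      have e1 := h.integral_eq (T + t) (by linarith) (EReal.coe_lt_top _)
      have e2 := h.integral_eq T hT (EReal.coe_lt_top _)
      have hI1 := h.integrable T hT (EReal.coe_lt_top _)
      have hadj := intervalIntegral.integral_add_adjacent_intervals hI1 (hint t ht)
      rw [show t + T = T + t by ring, e1, e2, ← hadj]
      abel }

end Helpers
noncomputable section Main

open Set Filter

lemma classKL_exp (k lam : ℝ) (hk : 1 ≤ k) (hlam : 0 < lam) :
    ClassKL (fun s t => k * s * Real.exp (-lam * t)) := by
  constructor
  · intro t _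
    refine ⟨Continuous.continuousOn (by continuity), ?_, by simp⟩
    intro a _ b _ hab
    show k * a * Real.exp (-lam * t) < k * b * Real.exp (-lam * t)
    have he := Real.exp_pos (-lam * t)
    nlinarith [mul_pos (sub_pos.mpr hab) he]
  · intro s hs
    refine ⟨Continuous.continuousOn (by continuity), ?_, ?_⟩
    · intro a _ b _ hab
      have h1 : Real.exp (-lam * b) ≤ Real.exp (-lam * a) :=
        Real.exp_le_exp.mpr (by nlinarith)
      have h2 : 0 ≤ k * s := by nlinarith
      exact mul_le_mul_of_nonneg_left h1 h2
    · have h2 : Tendsto (fun t : ℝ => lam * t) atTop atTop :=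
        Tendsto.const_mul_atTop hlam tendsto_id
      have h1 : Tendsto (fun t : ℝ => Real.exp (-lam * t)) atTop (𝓝 0) := by
        have h3 := Real.tendsto_exp_neg_atTop_nhds_zero.comp h2
        exact Filter.Tendsto.congr (fun t => by simp [Function.comp, neg_mul]) h3
      simpa using h1.const_mul (k * s)

end Main

set_option maxHeartbeats 2000000 in
/-- A linear time-invariant time-delay system is GES iff its origin is AS. -/
theorem linear_ges_iff_as
    (Δ : ℝ≥0) (n : ℕ) (A : Hist Δ n →L[ℝ] Vec n) :
    GES Δ (fun φ => A φ) ↔ AS Δ (fun φ => A φ) := by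
  constructor
  · rintro ⟨k, hk, lam, hlam, hsol⟩
    exact ⟨1, one_pos, fun s t => k * s * Real.exp (-lam * t), classKL_exp k lam hk hlam,
      fun x₀ tmax x hmax _ => hsol x₀ tmax x hmax⟩
  · rintro ⟨r, hr, β, hKL, hAS⟩
    -- core scaled estimate
    have core : ∀ (x₀ : Hist Δ n) (tmax : EReal) (x : ℝ → Vec n),
        IsMaxSolution₀ Δ (fun φ => A φ) x₀ tmax x →
        tmax = ⊤ ∧ ∀ t : ℝ, 0 ≤ t → ‖x t‖ ≤ ‖x₀‖ * (β r t / r) := by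
      intro x₀ tmax x hmax
      by_cases h0 : ‖x₀‖ = 0
      · have hb := hAS x₀ tmax x hmax (by rw [h0]; exact hr.le)
        refine ⟨hb.1, fun t ht => ?_⟩
        have h1 := hb.2 t ht
        rw [h0] at h1 ⊢
        have hz : β 0 t = 0 := (hKL.1 t ht).2.2
        rw [hz] at h1
        simpa using h1
      · have hpos : 0 < ‖x₀‖ := lt_of_le_of_ne (norm_nonneg _) (Ne.symm h0)
        set c := r / ‖x₀‖ with hc
        have hcpos : 0 < c := by positivity
        have hmax2 := isMaxSolution_smul A c (ne_of_gt hcpos) hmax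
        have hnorm : ‖c • x₀‖ = r := by
          have hns : ‖c • x₀‖ = ‖c‖ * ‖x₀‖ := norm_smul c x₀
          rw [hns, Real.norm_eq_abs, abs_of_pos hcpos, hc, div_mul_cancel₀ _ h0]
        have hb := hAS _ tmax _ hmax2 (le_of_eq hnorm)
        refine ⟨hb.1, fun t ht => ?_⟩
        have h2 : ‖c • x t‖ ≤ β ‖c • x₀‖ t := hb.2 t ht
        rw [hnorm] at h2
        have hns2 : ‖c • x t‖ = ‖c‖ * ‖x t‖ := norm_smul c (x t)
        rw [hns2, Real.norm_eq_abs, abs_of_pos hcpos, hc] at h2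
        have h3 := mul_le_mul_of_nonneg_left h2 (by positivity : (0:ℝ) ≤ ‖x₀‖ / r)
        have h4 : ‖x₀‖ / r * (r / ‖x₀‖ * ‖x t‖) = ‖x t‖ := by field_simp
        rw [h4] at h3
        calc ‖x t‖ ≤ ‖x₀‖ / r * β r t := h3
          _ = ‖x₀‖ * (β r t / r) := by ring
    have hβr_nonneg : ∀ t : ℝ, 0 ≤ t → 0 ≤ β r t := by
      intro t ht
      have hK := hKL.1 t ht
      have h01 : β 0 t < β r t := hK.2.1 (mem_Ici.mpr le_rfl) (mem_Ici.mpr hr.le) hr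
      have hz : β 0 t = 0 := hK.2.2
      linarith
    have hanti : AntitoneOn (β r) (Ici 0) := (hKL.2 r hr.le).2.1
    have htend : Tendsto (β r) atTop (𝓝 0) := (hKL.2 r hr.le).2.2
    obtain ⟨T₀, hT₀lt, hT₀0⟩ :=
      ((htend.eventually (gt_mem_nhds (by positivity : (0:ℝ) < r / 2))).and
        (eventually_ge_atTop (0:ℝ))).exists
    set T : ℝ := T₀ + (Δ:ℝ) + 1 with hTdef
    have hΔ0 : (0:ℝ) ≤ (Δ:ℝ) := Δ.coe_nonneg
    have hTpos : 0 < T := by rw [hTdef]; linarith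
    have hTΔ : 0 ≤ T - (Δ:ℝ) := by rw [hTdef]; linarith
    have hhalf : β r (T - (Δ:ℝ)) ≤ r / 2 := by
      refine le_trans (hanti (mem_Ici.mpr hT₀0) (mem_Ici.mpr hTΔ) ?_) hT₀lt.le
      rw [hTdef]; linarith
    set M : ℝ := β r 0 / r with hMdef
    have hβr0 : 0 < β r 0 := by
      have hK := hKL.1 0 le_rfl
      have h01 : β 0 0 < β r 0 := hK.2.1 (mem_Ici.mpr le_rfl) (mem_Ici.mpr hr.le) hr
      have hz : β 0 0 = 0 := hK.2.2
      linarith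
    have hM0 : 0 < M := div_pos hβr0 hr
    have hgM : ∀ t : ℝ, 0 ≤ t → β r t / r ≤ M := by
      intro t ht
      exact (div_le_div_iff_of_pos_right hr).mpr (hanti (mem_Ici.mpr le_rfl) (mem_Ici.mpr ht) ht)
    refine ⟨max 1 (2 * M), le_max_left _ _, Real.log 2 / T,
      div_pos (Real.log_pos one_lt_two) hTpos, ?_⟩
    intro x₀ tmax x hmax
    obtain ⟨htop, hest⟩ := core x₀ tmax x hmax
    refine ⟨htop, ?_⟩
    subst htop
    have hsol := hmax.1
    have hxc : ContinuousOn x (Ici (-(Δ:ℝ))) := by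
      have h1 := hsol.cont
      rwa [solset_eq] at h1
    have hcic : ∀ t : ℝ, 0 ≤ t → ContinuousOn x (Icc (t - (Δ:ℝ)) t) := by
      intro t ht
      refine hxc.mono ?_
      intro s hs
      simp only [mem_Icc] at hs
      simp only [mem_Ici]
      linarith [hs.1]
    have hshift : ∀ s : ℝ, 0 ≤ s → ∀ t : ℝ, 0 ≤ t →
        ‖x (t + s)‖ ≤ ‖seg Δ x s‖ * (β r t / r) := by
      intro s hs t ht
      have hsol' := isSolution_shift A s hs hsol
      have hmax' : IsMaxSolution₀ Δ (fun φ => A φ) (seg Δ x s) ⊤ (fun t => x (t + s)) :=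
        ⟨hsol', fun _ _ _ _ => le_top⟩
      exact (core _ _ _ hmax').2 t ht
    have hiter : ∀ m : ℕ, ‖seg Δ x ((m : ℝ) * T)‖ ≤ (1/2 : ℝ)^m * ‖x₀‖ := by
      intro m
      induction m with
      | zero =>
        simp only [Nat.cast_zero, zero_mul, pow_zero, one_mul]
        refine norm_seg_le x 0 (hcic 0 le_rfl) (norm_nonneg _) ?_
        intro τ h1 h2
        have hτ : τ ∈ Icc (-(Δ:ℝ)) (0:ℝ) := ⟨by linarith, h2⟩
        rw [hsol.init ⟨τ, hτ⟩]
        exact ContinuousMap.norm_coe_le_norm x₀ _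
      | succ m ih =>
        have hs : (0:ℝ) ≤ (m:ℝ) * T := by positivity
        have hcast : ((m + 1 : ℕ) : ℝ) = (m:ℝ) + 1 := by push_cast; ring
        rw [hcast]
        refine norm_seg_le x (((m:ℝ) + 1) * T) (hcic _ (by positivity)) (by positivity) ?_
        intro τ h1 h2
        have hτ1 : T - (Δ:ℝ) ≤ τ - (m:ℝ) * T := by nlinarith
        have hτ0 : 0 ≤ τ - (m:ℝ) * T := by linarith
        have key := hshift ((m:ℝ) * T) hs (τ - (m:ℝ) * T) hτ0
        rw [sub_add_cancel] at key
        have hβle : β r (τ - (m:ℝ) * T) ≤ r / 2 :=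
          le_trans (hanti (mem_Ici.mpr hTΔ) (mem_Ici.mpr hτ0) hτ1) hhalf
        have hsegnn : 0 ≤ ‖seg Δ x ((m:ℝ) * T)‖ := norm_nonneg _
        have hx0nn : 0 ≤ ‖x₀‖ := norm_nonneg _
        have hstep : ‖seg Δ x ((m:ℝ) * T)‖ * (β r (τ - (m:ℝ) * T) / r) ≤
            (1/2 : ℝ)^m * ‖x₀‖ * (1/2 : ℝ) := by
          have hdiv : β r (τ - (m:ℝ) * T) / r ≤ 1/2 := by
            rw [div_le_iff₀ hr]; linarith [hβle]
          have hdnn : 0 ≤ β r (τ - (m:ℝ) * T) / r :=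
            div_nonneg (hβr_nonneg _ hτ0) hr.le
          have hpm : (0:ℝ) ≤ (1/2:ℝ)^m * ‖x₀‖ := by positivity
          exact mul_le_mul ih hdiv hdnn hpm
        calc ‖x τ‖ ≤ ‖seg Δ x ((m:ℝ) * T)‖ * (β r (τ - (m:ℝ) * T) / r) := key
          _ ≤ (1/2 : ℝ)^m * ‖x₀‖ * (1/2 : ℝ) := hstep
          _ = (1/2 : ℝ)^(m+1) * ‖x₀‖ := by ring
    intro t ht
    set m : ℕ := ⌊t / T⌋₊ with hm
    have hmle : (m:ℝ) * T ≤ t := by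
      have h1 : (m:ℝ) ≤ t / T := Nat.floor_le (div_nonneg ht hTpos.le)
      calc (m:ℝ) * T ≤ (t / T) * T := by nlinarith
        _ = t := by field_simp
    have hlt : t / T < (m:ℝ) + 1 := Nat.lt_floor_add_one _
    have key := hshift ((m:ℝ) * T) (by positivity) (t - (m:ℝ) * T) (by linarith)
    rw [sub_add_cancel] at key
    have hg := hgM (t - (m:ℝ) * T) (by linarith)
    have hdnn : 0 ≤ β r (t - (m:ℝ) * T) / r :=
      div_nonneg (hβr_nonneg _ (by linarith)) hr.le
    have hb1 : ‖x t‖ ≤ (1/2 : ℝ)^m * ‖x₀‖ * M := by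
      calc ‖x t‖ ≤ ‖seg Δ x ((m:ℝ) * T)‖ * (β r (t - (m:ℝ) * T) / r) := key
        _ ≤ ((1/2 : ℝ)^m * ‖x₀‖) * M :=
          mul_le_mul (hiter m) hg hdnn (by positivity)
    -- exponential bound
    have hl2 : 0 < Real.log 2 := Real.log_pos one_lt_two
    have h2m : (1/2 : ℝ)^m = Real.exp (-((m:ℝ) * Real.log 2)) := by
      rw [Real.exp_neg, Real.exp_nat_mul, Real.exp_log two_pos, one_div, inv_pow]
    have hloga : Real.log 2 / T * t ≤ ((m:ℝ) + 1) * Real.log 2 := by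
      have h2 : t / T ≤ (m:ℝ) + 1 := hlt.le
      calc Real.log 2 / T * t = (t / T) * Real.log 2 := by ring
        _ ≤ ((m:ℝ) + 1) * Real.log 2 := by nlinarith
    have hexp1 : Real.exp (-((m:ℝ) * Real.log 2)) ≤
        2 * Real.exp (-(Real.log 2 / T) * t) := by
      have harg : -((m:ℝ) * Real.log 2) ≤ Real.log 2 + -(Real.log 2 / T) * t := by
        nlinarith [hloga]
      calc Real.exp (-((m:ℝ) * Real.log 2))
          ≤ Real.exp (Real.log 2 + -(Real.log 2 / T) * t) := Real.exp_le_exp.mpr harg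
        _ = 2 * Real.exp (-(Real.log 2 / T) * t) := by
            rw [Real.exp_add, Real.exp_log two_pos]
    have hexpos := Real.exp_pos (-(Real.log 2 / T) * t)
    have hfin : (1/2 : ℝ)^m * M ≤ max 1 (2 * M) * Real.exp (-(Real.log 2 / T) * t) := by
      rw [h2m]
      calc Real.exp (-((m:ℝ) * Real.log 2)) * M
          ≤ (2 * Real.exp (-(Real.log 2 / T) * t)) * M := by nlinarith [hexp1, hM0]
        _ = (2 * M) * Real.exp (-(Real.log 2 / T) * t) := by ring
        _ ≤ max 1 (2 * M) * Real.exp (-(Real.log 2 / T) * t) :=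
          mul_le_mul_of_nonneg_right (le_max_right _ _) hexpos.le
    have hx0nn : 0 ≤ ‖x₀‖ := norm_nonneg _
    calc ‖x t‖ ≤ (1/2 : ℝ)^m * ‖x₀‖ * M := hb1
      _ = ‖x₀‖ * ((1/2 : ℝ)^m * M) := by ring
      _ ≤ ‖x₀‖ * (max 1 (2 * M) * Real.exp (-(Real.log 2 / T) * t)) :=
        mul_le_mul_of_nonneg_left hfin hx0nn
      _ = max 1 (2 * M) * ‖x₀‖ * Real.exp (-(Real.log 2 / T) * t) := by ring
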